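/- Let $G$ be a simple graph on $n$ vertices in which every connected component has at most $k$ vertices, where $1 \leq k \leq n$. Write $n = pk + q$ with $0 \leq q < k$. Then the number of edges of $G$ satisfies $|E(G)| \leq p\binom{k}{2} + \binom{q}{2}$. -/

import Mathlib

open SimpleGraph

/-- A graph is in a *failure state* for threshold `k` if every connected
component has order at most `k`. -/
def failureState {V : Type*} (G : SimpleGraph V) (k : ℕ) : Prop :=
  ∀ v : V, (G.connectedComponentMk v).supp.ncard ≤ k

/-- `S` is a vertex disconnecting set: removing the vertices of `S` from `G`
leaves every component with at most `k` vertices. -/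
def vertexDisconnects {V : Type*} (G : SimpleGraph V) (k : ℕ) (S : Set V) : Prop :=
  failureState (G.induce Sᶜ) k

/-- Component order proportion vertex connectivity: minimum size of a vertex
disconnecting set. -/
noncomputable def COv {V : Type*} (G : SimpleGraph V) (k : ℕ) : ℕ :=
  sInf {c | ∃ S : Set V, S.ncard = c ∧ vertexDisconnects G k S}

/-- Component order proportion edge connectivity: minimum size of an edge
disconnecting set. -/
noncomputable def COe {V : Type*} (G : SimpleGraph V) (k : ℕ) : ℕ :=
  sInf {c | ∃ E' : Set (Sym2 V), E' ⊆ G.edgeSet ∧ E'.ncard = c ∧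
    failureState (G.deleteEdges E') k}

/-- Minimum of `COv` over all graphs with `n` vertices and `m` edges. -/
noncomputable def gminV (n k m : ℕ) : ℕ :=
  sInf {c | ∃ G : SimpleGraph (Fin n), G.edgeSet.ncard = m ∧ COv G k = c}

/-- Minimum of `COe` over all graphs with `n` vertices and `m` edges. -/
noncomputable def gminE (n k m : ℕ) : ℕ :=
  sInf {c | ∃ G : SimpleGraph (Fin n), G.edgeSet.ncard = m ∧ COe G k = c}


private lemma choose_two_add' (a b : ℕ) : (a + b).choose 2 = a.choose 2 + b.choose 2 + a * b := by
  induction b with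
  | zero => simp
  | succ b ih =>
    have h1 : (a + (b + 1)) = (a + b) + 1 := by ring
    have h2 : ∀ n : ℕ, (n + 1).choose 2 = n.choose 2 + n := by
      intro n
      rw [show (n + 1).choose 2 = n.choose 1 + n.choose 2 from Nat.choose_succ_succ n 1,
        Nat.choose_one_right, Nat.add_comm]
    rw [h1, h2, ih, h2, Nat.mul_succ]
    ring

private lemma exchange' (k q s : ℕ) (hq : q ≤ k) (hs : s ≤ k) (h : k ≤ q + s) :
    q.choose 2 + s.choose 2 ≤ k.choose 2 + (q + s - k).choose 2 := by
  set m := q + s - k with hm'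
  have hm : k + m = q + s := by omega
  have h1 : (q + s).choose 2 = q.choose 2 + s.choose 2 + q * s := choose_two_add' q s
  have h2 : (q + s).choose 2 = k.choose 2 + m.choose 2 + k * m := by
    rw [← hm]; exact choose_two_add' k m
  have h3 : k * m ≤ q * s := by
    zify
    have hq' : (q : ℤ) ≤ k := by exact_mod_cast hq
    have hs' : (s : ℤ) ≤ k := by exact_mod_cast hs
    have hm2 : (k : ℤ) + m = q + s := by exact_mod_cast hm
    nlinarith [mul_nonneg (sub_nonneg.2 hq') (sub_nonneg.2 hs')]
  linarith

private lemma step' (k : ℕ) (hk : 0 < k) (n s : ℕ) (hs : s ≤ k) :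
    s.choose 2 + (n / k * k.choose 2 + (n % k).choose 2)
      ≤ (n + s) / k * k.choose 2 + ((n + s) % k).choose 2 := by
  set p := n / k with hp'
  set q := n % k with hq'
  have hq : q < k := Nat.mod_lt _ hk
  have hn : p * k + q = n := Nat.div_add_mod' n k
  by_cases hcase : q + s < k
  · have he : n + s = (q + s) + p * k := by omega
    have hdiv : (n + s) / k = p := by
      rw [he, Nat.add_mul_div_right _ _ hk, Nat.div_eq_of_lt hcase, Nat.zero_add]
    have hmod : (n + s) % k = q + s := by
      rw [he, Nat.add_mul_mod_self_right, Nat.mod_eq_of_lt hcase]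
    rw [hdiv, hmod]
    have h4 : q.choose 2 + s.choose 2 ≤ (q + s).choose 2 := by
      rw [choose_two_add']; exact Nat.le_add_right _ _
    linarith
  · have hks : k ≤ q + s := le_of_not_gt hcase
    have hlt : q + s - k < k := by omega
    have he : n + s = (q + s - k) + (p + 1) * k := by
      have : (p + 1) * k = p * k + k := by ring
      omega
    have hdiv : (n + s) / k = p + 1 := by
      rw [he, Nat.add_mul_div_right _ _ hk, Nat.div_eq_of_lt hlt, Nat.zero_add]
    have hmod : (n + s) % k = q + s - k := by
      rw [he, Nat.add_mul_mod_self_right, Nat.mod_eq_of_lt hlt]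
    rw [hdiv, hmod, add_mul, one_mul]
    have := exchange' k q s hq.le hs hks
    linarith

private lemma sum_choose_le' {ι : Type*} (k : ℕ) (hk : 0 < k) (t : Finset ι) (f : ι → ℕ)
    (hf : ∀ i ∈ t, f i ≤ k) :
    ∑ i ∈ t, (f i).choose 2
      ≤ (∑ i ∈ t, f i) / k * k.choose 2 + ((∑ i ∈ t, f i) % k).choose 2 := by
  classical
  induction t using Finset.induction_on with
  | empty => simp
  | insert a t' ha ih =>
    rw [Finset.sum_insert ha, Finset.sum_insert ha]
    have h1 : ∑ i ∈ t', (f i).choose 2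
        ≤ (∑ i ∈ t', f i) / k * k.choose 2 + ((∑ i ∈ t', f i) % k).choose 2 :=
      ih (fun i hi => hf i (Finset.mem_insert_of_mem hi))
    have h2 := step' k hk (∑ i ∈ t', f i) (f a) (hf a (Finset.mem_insert_self a t'))
    have h3 : (∑ i ∈ t', f i) + f a = f a + ∑ i ∈ t', f i := by ring
    rw [h3] at h2
    linarith

theorem maxEdgesFailureState {V : Type*} [Fintype V] (G : SimpleGraph V)
    (n k p q : ℕ) (hV : Fintype.card V = n) (hk1 : 1 ≤ k) (hkn : k ≤ n)
    (hn : n = p * k + q) (hq : q < k) (hfail : failureState G k) :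
    G.edgeSet.ncard ≤ p * k.choose 2 + q.choose 2 := by
  classical
  haveI : Fintype G.ConnectedComponent := Fintype.ofFinite _
  set φ : Sym2 V → G.ConnectedComponent := fun e => G.connectedComponentMk (Quot.out e).1 with hφ
  have fact1 : ∀ e : Sym2 V, (Quot.out e).1 ∈ e := fun e => Sym2.out_fst_mem e
  have fact2 : ∀ e ∈ G.edgeSet, ∀ v ∈ e, ∀ w ∈ e,
      G.connectedComponentMk v = G.connectedComponentMk w := by
    intro e
    induction e using Sym2.ind with
    | _ a b =>
      intro he v hv w hw
      have hadj : G.Adj a b := G.mem_edgeSet.mp he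
      rw [Sym2.mem_iff] at hv hw
      rcases hv with rfl | rfl <;> rcases hw with rfl | rfl <;>
        first
          | rfl
          | exact ConnectedComponent.connectedComponentMk_eq_of_adj hadj
          | exact (ConnectedComponent.connectedComponentMk_eq_of_adj hadj).symm
  have key : ∀ e ∈ G.edgeFinset, ∀ v ∈ e, G.connectedComponentMk v = φ e := by
    intro e he v hv
    exact fact2 e (mem_edgeFinset.mp he) v hv _ (fact1 e)
  have hcard : G.edgeFinset.card
      = ∑ c : G.ConnectedComponent, (G.edgeFinset.filter (fun e => φ e = c)).card :=
    Finset.card_eq_sum_card_fiberwise (fun e _ => Finset.mem_univ _)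
  have hfiber : ∀ c : G.ConnectedComponent,
      (G.edgeFinset.filter (fun e => φ e = c)).card ≤ (c.supp.ncard).choose 2 := by
    intro c
    haveI : Fintype ↥c.supp := Fintype.ofFinite _
    have hsub : (G.edgeFinset.filter (fun e => φ e = c))
        ⊆ Finset.map ⟨Sym2.map (Subtype.val : ↥c.supp → V),
            Sym2.map.injective Subtype.val_injective⟩ (G.induce c.supp).edgeFinset := by
      intro e he
      rw [Finset.mem_filter] at he
      obtain ⟨he1, he2⟩ := he
      have hmem : ∀ v ∈ e, v ∈ c.supp := by
        intro v hv
        rw [ConnectedComponent.mem_supp_iff, key e he1 v hv, he2]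
      refine Finset.mem_map.mpr ⟨Sym2.attachWith e hmem, ?_, ?_⟩
      · rw [mem_edgeFinset]
        have he' : e ∈ G.edgeSet := mem_edgeFinset.mp he1
        revert hmem he'
        induction e using Sym2.ind with
        | _ a b =>
          intro hmem he'
          exact he'
      · exact Sym2.attachWith_map_subtypeVal hmem
    calc (G.edgeFinset.filter (fun e => φ e = c)).card
        ≤ _ := Finset.card_le_card hsub
      _ = (G.induce c.supp).edgeFinset.card := Finset.card_map _
      _ ≤ (Fintype.card ↥c.supp).choose 2 := card_edgeFinset_le_card_choose_two
      _ = (c.supp.ncard).choose 2 := by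
          rw [Set.ncard_eq_toFinset_card', Set.toFinset_card]
  have hsupp : ∀ c : G.ConnectedComponent, c.supp.ncard ≤ k := by
    intro c
    induction c using ConnectedComponent.ind with
    | _ v => exact hfail v
  have hsuppcard : ∀ c : G.ConnectedComponent,
      c.supp.ncard = (Finset.univ.filter (fun v => G.connectedComponentMk v = c)).card := by
    intro c
    rw [Set.ncard_eq_toFinset_card']
    congr 1
    ext v
    simp [ConnectedComponent.mem_supp_iff]
  have hsumV : ∑ c : G.ConnectedComponent, c.supp.ncard = n := by
    rw [← hV, show Fintype.card V = (Finset.univ : Finset V).card from rfl,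
      Finset.card_eq_sum_card_fiberwise
        (f := fun v => G.connectedComponentMk v) (t := Finset.univ)
        (fun v _ => Finset.mem_univ _)]
    exact Finset.sum_congr rfl fun c _ => hsuppcard c
  have hfin := sum_choose_le' k hk1 Finset.univ (fun c => c.supp.ncard) (fun c _ => hsupp c)
  rw [hsumV] at hfin
  have hdiv : n / k = p := by
    rw [hn, Nat.add_comm, Nat.add_mul_div_right _ _ hk1, Nat.div_eq_of_lt hq, Nat.zero_add]
  have hmod : n % k = q := by
    rw [hn, Nat.add_comm, Nat.add_mul_mod_self_right, Nat.mod_eq_of_lt hq]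
  have hE : G.edgeSet.ncard = G.edgeFinset.card := by
    rw [← coe_edgeFinset, Set.ncard_coe_finset]
  rw [hE, hcard]
  calc ∑ c : G.ConnectedComponent, (G.edgeFinset.filter (fun e => φ e = c)).card
      ≤ ∑ c : G.ConnectedComponent, (c.supp.ncard).choose 2 :=
        Finset.sum_le_sum fun c _ => hfiber c
    _ ≤ n / k * k.choose 2 + (n % k).choose 2 := hfin
    _ = p * k.choose 2 + q.choose 2 := by rw [hdiv, hmod]
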